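/- Let I ⊆ ℝ be an open interval, N ∈ ℝ, and let f: I → ℝ be smooth with f(t) > 0 for all t ∈ I. For smooth v define L v = v'' + N (f'/f) v'. Then for all smooth compactly supported u, φ: I → ℝ, ∫_I (1/2) u'(t)² · (Lφ)(t) · f(t)^N dt − ∫_I u'(t) · (Lu)'(t) · φ(t) · f(t)^N dt = ∫_I ( u''(t)² + N·( (f'(t)/f(t))² − f''(t)/f(t) )·u'(t)² ) φ(t) f(t)^N dt. -/

import Mathlib

open MeasureTheory Real Set Function Filter

/-- The integral over ℝ of the derivative of a compactly supported `C¹` function is zero. -/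
lemma integral_deriv_eq_zero_of_compact_support (G : ℝ → ℝ)
    (h1 : ContDiff ℝ 1 G) (h2 : HasCompactSupport G) : ∫ x, deriv G x = 0 := by
  obtain ⟨r, hr⟩ : ∃ r, tsupport G ⊆ Metric.closedBall 0 r :=
    h2.isBounded.subset_closedBall 0
  set b : ℝ := -(|r| + 1) with hb
  have hbmem : ∀ x ≤ b, x ∉ tsupport G := by
    intro x hx hmem
    have h := hr hmem
    rw [Metric.mem_closedBall, Real.dist_eq, sub_zero] at h
    have h1 : -x ≤ |x| := neg_le_abs x
    have h2 : r ≤ |r| := le_abs_self r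
    have : -x ≥ |r| + 1 := by simp only [hb] at hx; linarith
    linarith
  have key : ∫ x in Set.Ioi b, deriv G x = -G b :=
    HasCompactSupport.integral_Ioi_deriv_eq h1 h2 b
  have hGb : G b = 0 := image_eq_zero_of_notMem_tsupport (hbmem b le_rfl)
  have heq : ∫ x, deriv G x = ∫ x in Set.Ioi b, deriv G x := by
    refine (setIntegral_eq_integral_of_forall_compl_eq_zero ?_).symm
    intro x hx
    have hxb : x ≤ b := le_of_not_gt hx
    exact notMem_support.mp fun h => (hbmem x hxb) (support_deriv_subset h)
  rw [heq, key, hGb, neg_zero]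

/-- One-dimensional weighted Bochner (Γ₂) identity for the weighted Laplacian
`L v = v'' + N (f'/f) v'` on `(I, f^N dt)`:
`∫ ½ (u')² (Lφ) f^N - ∫ u' (Lu)' φ f^N = ∫ ((u'')² + N ((f'/f)² - f''/f)(u')²) φ f^N`. -/
theorem statement_14 (I : Set ℝ) (hI : IsOpen I) (hIconv : Convex ℝ I) (N : ℝ)
    (f : ℝ → ℝ) (hf : ContDiffOn ℝ (⊤ : ℕ∞) f I) (hfpos : ∀ t ∈ I, 0 < f t) :
    ∀ u φ : ℝ → ℝ,
      ContDiff ℝ (⊤ : ℕ∞) u → HasCompactSupport u → tsupport u ⊆ I →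
      ContDiff ℝ (⊤ : ℕ∞) φ → HasCompactSupport φ → tsupport φ ⊆ I →
      (∫ t in I, 1 / 2 * deriv u t ^ 2
            * (deriv (deriv φ) t + N * (deriv f t / f t) * deriv φ t) * f t ^ N)
        - (∫ t in I, deriv u t
            * deriv (fun s => deriv (deriv u) s + N * (deriv f s / f s) * deriv u s) t
            * φ t * f t ^ N)
      = ∫ t in I,
          (deriv (deriv u) t ^ 2
            + N * ((deriv f t / f t) ^ 2 - deriv (deriv f) t / f t) * deriv u t ^ 2)
            * φ t * f t ^ N := by
  intro u φ hu hcu hsu hφ hcφ hsφ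
  -- derivative smoothness for globally smooth functions
  have hderiv : ∀ v : ℝ → ℝ, ContDiff ℝ (⊤ : ℕ∞) v → ContDiff ℝ (⊤ : ℕ∞) (deriv v) :=
    fun v hv => (contDiff_infty_iff_deriv.mp hv).2
  have hud : ∀ (v : ℝ → ℝ), ContDiff ℝ (⊤ : ℕ∞) v → ∀ t, HasDerivAt v (deriv v t) t :=
    fun v hv t => ((hv.differentiable (by simp)) t).hasDerivAt
  have hu1 : ContDiff ℝ (⊤ : ℕ∞) (deriv u) := hderiv u hu
  have hu2 : ContDiff ℝ (⊤ : ℕ∞) (deriv (deriv u)) := hderiv _ hu1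
  have hφ1 : ContDiff ℝ (⊤ : ℕ∞) (deriv φ) := hderiv φ hφ
  -- facts about f on I
  have hf1 : ContDiffOn ℝ (⊤ : ℕ∞) (deriv f) I := hf.deriv_of_isOpen hI (by simp)
  have hf2 : ContDiffOn ℝ (⊤ : ℕ∞) (deriv (deriv f)) I := hf1.deriv_of_isOpen hI (by simp)
  have hfd1 : ∀ t ∈ I, HasDerivAt f (deriv f t) t := fun t ht =>
    ((hf.differentiableOn (by simp)).differentiableAt (hI.mem_nhds ht)).hasDerivAt
  have hfd2 : ∀ t ∈ I, HasDerivAt (deriv f) (deriv (deriv f) t) t := fun t ht =>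
    ((hf1.differentiableOn (by simp)).differentiableAt (hI.mem_nhds ht)).hasDerivAt
  -- weight
  have hwd : ∀ t ∈ I, HasDerivAt (fun s => f s ^ N) (N * (deriv f t / f t) * f t ^ N) t := by
    intro t ht
    have h0 := hfpos t ht
    have h := (hfd1 t ht).rpow_const (p := N) (Or.inl h0.ne')
    convert h using 1
    rw [show N - 1 = N - (1:ℝ) from rfl, Real.rpow_sub h0, Real.rpow_one]
    have hne : f t ≠ 0 := h0.ne'
    field_simp
  have hwc : ∀ t ∈ I, ContDiffAt ℝ (⊤ : ℕ∞) (fun s => f s ^ N) t := fun t ht =>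
    (hf.contDiffAt (hI.mem_nhds ht)).rpow_const_of_ne (hfpos t ht).ne'
  -- supports
  set K := tsupport φ with hK
  have hKI : K ⊆ I := hsφ
  have hKop : IsOpen Kᶜ := (isClosed_tsupport φ).isOpen_compl
  have hp0 : ∀ t ∉ K, φ t = 0 := fun t ht => image_eq_zero_of_notMem_tsupport ht
  have hp1 : ∀ t ∉ K, deriv φ t = 0 := fun t ht =>
    notMem_support.mp fun h => ht (support_deriv_subset h)
  have hp2 : ∀ t ∉ K, deriv (deriv φ) t = 0 := by
    intro t ht
    refine notMem_support.mp fun h => ht ?_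
    exact closure_minimal support_deriv_subset (isClosed_tsupport φ) (support_deriv_subset h)
  -- the three integrands and the boundary function
  set A : ℝ → ℝ := fun t => 1 / 2 * deriv u t ^ 2
      * (deriv (deriv φ) t + N * (deriv f t / f t) * deriv φ t) * f t ^ N with hA
  set B : ℝ → ℝ := fun t => deriv u t
      * deriv (fun s => deriv (deriv u) s + N * (deriv f s / f s) * deriv u s) t
      * φ t * f t ^ N with hBdef
  set C : ℝ → ℝ := fun t => (deriv (deriv u) t ^ 2
      + N * ((deriv f t / f t) ^ 2 - deriv (deriv f) t / f t) * deriv u t ^ 2)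
      * φ t * f t ^ N with hC
  set Bg : ℝ → ℝ := fun t => deriv u t
      * (deriv (deriv (deriv u)) t
        + (N * ((deriv (deriv f) t * f t - deriv f t * deriv f t) / f t ^ 2) * deriv u t
           + N * (deriv f t / f t) * deriv (deriv u) t))
      * φ t * f t ^ N with hBg
  set G : ℝ → ℝ := fun t =>
      (1 / 2 * deriv u t ^ 2 * deriv φ t - deriv u t * deriv (deriv u) t * φ t) * f t ^ N
      with hG
  have hinner : ∀ t ∈ I,
      HasDerivAt (fun s => deriv (deriv u) s + N * (deriv f s / f s) * deriv u s)
        (deriv (deriv (deriv u)) t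
          + (N * ((deriv (deriv f) t * f t - deriv f t * deriv f t) / f t ^ 2) * deriv u t
             + N * (deriv f t / f t) * deriv (deriv u) t)) t := by
    intro t ht
    have h2 : HasDerivAt (fun s => deriv f s / f s)
        ((deriv (deriv f) t * f t - deriv f t * deriv f t) / f t ^ 2) t :=
      (hfd2 t ht).div (hfd1 t ht) (hfpos t ht).ne'
    exact (hud _ hu2 t).add ((h2.const_mul N).mul (hud _ hu1 t))
  have hBB : B = Bg := by
    funext t
    by_cases ht : t ∈ I
    · simp only [hBdef, hBg]
      rw [(hinner t ht).deriv]
    · have ht' : t ∉ K := fun h => ht (hKI h)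
      simp only [hBdef, hBg, hp0 t ht', mul_zero, zero_mul]
  have h0A : ∀ t ∉ K, A t = 0 := by
    intro t ht; simp only [hA]; rw [hp1 t ht, hp2 t ht]; ring
  have h0Bg : ∀ t ∉ K, Bg t = 0 := by
    intro t ht; simp only [hBg]; rw [hp0 t ht]; ring
  have h0C : ∀ t ∉ K, C t = 0 := by
    intro t ht; simp only [hC]; rw [hp0 t ht]; ring
  have h0G : ∀ t ∉ K, G t = 0 := by
    intro t ht; simp only [hG]; rw [hp0 t ht, hp1 t ht]; ring
  -- derivative of G on I
  have hGd : ∀ t ∈ I, HasDerivAt G (A t - Bg t - C t) t := by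
    intro t ht
    have hft := hfpos t ht
    have hne : f t ≠ 0 := hft.ne'
    have h2 := hud _ hu1 t
    have h3 := hud _ hu2 t
    have q1 := hud φ hφ t
    have q2 := hud _ hφ1 t
    have hw := hwd t ht
    have gA := ((((h2.pow 2).const_mul (1/2 : ℝ)).mul q2).sub ((h2.mul h3).mul q1))
    have hmain := gA.mul hw
    rw [hG]
    refine hmain.congr_deriv ?_
    simp only [hA, hBg, hC, Pi.pow_apply, Pi.mul_apply, Pi.sub_apply]
    field_simp
    ring
  -- continuity
  have contIat : ∀ t ∈ I, ContinuousAt f t ∧ ContinuousAt (deriv f) t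
      ∧ ContinuousAt (deriv (deriv f)) t ∧ ContinuousAt (fun s => f s ^ N) t := fun t ht =>
    ⟨hf.continuousOn.continuousAt (hI.mem_nhds ht),
     hf1.continuousOn.continuousAt (hI.mem_nhds ht),
     hf2.continuousOn.continuousAt (hI.mem_nhds ht),
     (hwc t ht).continuousAt⟩
  have contOf : ∀ F : ℝ → ℝ, (∀ t ∈ I, ContinuousAt F t) → (∀ t ∉ K, F t = 0) →
      Continuous F := by
    intro F h1 h2
    rw [continuous_iff_continuousAt]
    intro t
    by_cases ht : t ∈ I
    · exact h1 t ht
    · have ht' : t ∈ Kᶜ := fun h => ht (hKI h)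
      have hev : F =ᶠ[nhds t] fun _ => 0 := eventually_of_mem (hKop.mem_nhds ht') h2
      exact continuousAt_const.congr hev.symm
  have cu1 : Continuous (deriv u) := hu1.continuous
  have cu2 : Continuous (deriv (deriv u)) := hu2.continuous
  have cu3 : Continuous (deriv (deriv (deriv u))) := (hderiv _ hu2).continuous
  have cq1 : Continuous (deriv φ) := hφ1.continuous
  have cq2 : Continuous (deriv (deriv φ)) := (hderiv _ hφ1).continuous
  have contA : Continuous A := by
    refine contOf _ (fun t ht => ?_) h0A
    obtain ⟨cf, cf1, cf2, cw⟩ := contIat t ht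
    have hne : f t ≠ 0 := (hfpos t ht).ne'
    simp only [hA]
    exact ((continuousAt_const.mul ((cu1.continuousAt).pow 2)).mul
      (cq2.continuousAt.add ((continuousAt_const.mul (cf1.div cf hne)).mul
        cq1.continuousAt))).mul cw
  have contBg : Continuous Bg := by
    refine contOf _ (fun t ht => ?_) h0Bg
    obtain ⟨cf, cf1, cf2, cw⟩ := contIat t ht
    have hne : f t ≠ 0 := (hfpos t ht).ne'
    simp only [hBg]
    exact (((cu1.continuousAt.mul (cu3.continuousAt.add
      (((continuousAt_const.mul (((cf2.mul cf).sub (cf1.mul cf1)).div (cf.pow 2)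
          (pow_ne_zero 2 hne))).mul cu1.continuousAt).add
        ((continuousAt_const.mul (cf1.div cf hne)).mul cu2.continuousAt)))).mul
      (hφ.continuous.continuousAt)).mul cw)
  have contC : Continuous C := by
    refine contOf _ (fun t ht => ?_) h0C
    obtain ⟨cf, cf1, cf2, cw⟩ := contIat t ht
    have hne : f t ≠ 0 := (hfpos t ht).ne'
    simp only [hC]
    exact ((((cu2.continuousAt.pow 2).add ((continuousAt_const.mul
      (((cf1.div cf hne).pow 2).sub (cf2.div cf hne))).mul
        (cu1.continuousAt.pow 2))).mul (hφ.continuous.continuousAt)).mul cw)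
  -- G is C¹ with compact support
  have hGsm : ContDiff ℝ 1 G := by
    rw [contDiff_iff_contDiffAt]
    intro t
    by_cases ht : t ∈ I
    · rw [hG]
      have hw1 : ContDiffAt ℝ 1 (fun s => f s ^ N) t := (hwc t ht).of_le (mod_cast le_top)
      have c1 : ContDiffAt ℝ 1 (deriv u) t := hu1.contDiffAt.of_le (mod_cast le_top)
      have c2 : ContDiffAt ℝ 1 (deriv (deriv u)) t := hu2.contDiffAt.of_le (mod_cast le_top)
      have d1 : ContDiffAt ℝ 1 (deriv φ) t := hφ1.contDiffAt.of_le (mod_cast le_top)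
      have d0 : ContDiffAt ℝ 1 φ t := hφ.contDiffAt.of_le (mod_cast le_top)
      exact (((contDiffAt_const.mul (c1.pow 2)).mul d1).sub ((c1.mul c2).mul d0)).mul hw1
    · have ht' : t ∈ Kᶜ := fun h => ht (hKI h)
      have hev : G =ᶠ[nhds t] fun _ => 0 := eventually_of_mem (hKop.mem_nhds ht') h0G
      exact (contDiffAt_const (c := (0:ℝ))).congr_of_eventuallyEq hev
  have hGcs : HasCompactSupport G := HasCompactSupport.intro hcφ h0G
  have hdG0 : ∀ t ∉ I, deriv G t = 0 := by
    intro t ht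
    have ht' : t ∈ Kᶜ := fun h => ht (hKI h)
    have hev : G =ᶠ[nhds t] fun _ => 0 := eventually_of_mem (hKop.mem_nhds ht') h0G
    rw [hev.deriv_eq]
    simp
  -- integrability and reduction to integrals over ℝ
  have hiA : Integrable A := contA.integrable_of_hasCompactSupport
    (HasCompactSupport.intro hcφ h0A)
  have hiBg : Integrable Bg := contBg.integrable_of_hasCompactSupport
    (HasCompactSupport.intro hcφ h0Bg)
  have hiC : Integrable C := contC.integrable_of_hasCompactSupport
    (HasCompactSupport.intro hcφ h0C)
  have seteq : ∀ F : ℝ → ℝ, (∀ t ∉ K, F t = 0) → (∫ t in I, F t) = ∫ t, F t := fun F h0 =>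
    setIntegral_eq_integral_of_forall_compl_eq_zero fun x hx => h0 x fun h => hx (hKI h)
  have funeq : (fun t => A t - Bg t - C t) = deriv G := by
    funext t
    by_cases ht : t ∈ I
    · exact ((hGd t ht).deriv).symm
    · have ht' : t ∉ K := fun h => ht (hKI h)
      rw [hdG0 t ht, h0A t ht', h0Bg t ht', h0C t ht']
      ring
  have hzero : (∫ t, A t) - (∫ t, Bg t) - (∫ t, C t) = 0 := by
    have h1 : Integrable (fun t => A t - Bg t) volume := hiA.sub hiBg
    rw [← integral_sub hiA hiBg, ← integral_sub h1 hiC]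
    have : (∫ t, A t - Bg t - C t) = ∫ t, deriv G t := by
      rw [show (fun t => A t - Bg t - C t) = deriv G from funeq]
    rw [this]
    exact integral_deriv_eq_zero_of_compact_support G hGsm hGcs
  rw [hBB, seteq A h0A, seteq Bg h0Bg, seteq C h0C]
  linarith [hzero]
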